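/- Let (G, δ, ‖·‖) be a locally compact normed group with dilatations. Then the group operation is differentiable at the identity with derivative β: for all u, v ∈ G, lim_{ε→0+} (1/ε) · ‖ (δ_ε β(u, v))⁻¹ · (δ_ε u)(δ_ε v) ‖ = 0, uniformly with respect to (u, v) in compact sets. -/

import Mathlib

open Filter Topology

open Filter Topology UniformSpace Set Uniformity

section Helpers

variable {ι α β β' γ : Type*} {l : Filter ι}

lemma my_tuo_const_iff [UniformSpace β] {F : ι → α → β} {c : β} {s : Set α} :
    TendstoUniformlyOn F (fun _ => c) l s ↔ ∀ U ∈ 𝓝 c, ∀ᶠ i in l, ∀ x ∈ s, F i x ∈ U := by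
  constructor
  · intro h U hU
    obtain ⟨V, hV, hVU⟩ := UniformSpace.mem_nhds_iff.1 hU
    filter_upwards [h V hV] with i hi x hx using hVU (hi x hx)
  · intro h u hu
    filter_upwards [h (ball c u) (ball_mem_nhds c hu)] with i hi x hx using hi x hx

lemma my_eventually_mem [UniformSpace α] {g : ι → γ → α} {g0 : γ → α} {K : Set γ}
    (hg : TendstoUniformlyOn g g0 l K) {O : Set α} (hO : IsOpen O)
    (h0 : ∀ x ∈ K, g0 x ∈ O) (hC : IsCompact (g0 '' K)) :
    ∀ᶠ i in l, ∀ x ∈ K, g i x ∈ O := by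
  obtain ⟨V, hV, -, hball⟩ := lebesgue_number_of_compact_open hC hO
    (by rintro _ ⟨x, hx, rfl⟩; exact h0 x hx)
  filter_upwards [hg V hV] with i hi x hx
  exact hball _ ⟨x, hx, rfl⟩ (hi x hx)

lemma my_prod_same [UniformSpace β] [UniformSpace β'] {F : ι → α → β} {f : α → β}
    {F' : ι → α → β'} {f' : α → β'} {s : Set α}
    (h : TendstoUniformlyOn F f l s) (h' : TendstoUniformlyOn F' f' l s) :
    TendstoUniformlyOn (fun i a => (F i a, F' i a)) (fun a => (f a, f' a)) l s := by
  intro u hu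
  exact (tendsto_id.prodMk tendsto_id).eventually ((h.prodMk h') u hu)

lemma my_comp_moving [UniformSpace α] [UniformSpace β]
    {F : ι → α → β} {f : α → β} {s : Set α} (hs : IsCompact s)
    (hF : TendstoUniformlyOn F f l s) (hf : ContinuousOn f s)
    {g : ι → γ → α} {g0 : γ → α} {K : Set γ}
    (hg : TendstoUniformlyOn g g0 l K) (h0 : ∀ x ∈ K, g0 x ∈ s)
    (hmem : ∀ᶠ i in l, ∀ x ∈ K, g i x ∈ s) :
    TendstoUniformlyOn (fun i x => F i (g i x)) (fun x => f (g0 x)) l K := by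
  intro u hu
  obtain ⟨u1, hu1, hu1u⟩ := comp_mem_uniformity_sets hu
  have huc : {q : α × α | q ∈ s ×ˢ s → (f q.1, f q.2) ∈ u1} ∈ 𝓤 α :=
    mem_inf_principal.1 ((hs.uniformContinuousOn_of_continuous hf) hu1)
  filter_upwards [hF u1 hu1, hg _ huc, hmem] with i hFi hgi hmi x hx
  have h1 : (f (g0 x), f (g i x)) ∈ u1 :=
    hgi x hx (mk_mem_prod (h0 x hx) (hmi x hx))
  have h2 : (f (g i x), F i (g i x)) ∈ u1 := hFi _ (hmi x hx)
  exact hu1u (SetRel.prodMk_mem_comp h1 h2)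

end Helpers


/-- For a locally compact normed group with dilatations
`(G, δ, ‖·‖)`, the group operation is differentiable at the identity with
derivative `β`: `lim_{ε→0+} (1/ε)·‖(δ_ε β(u,v))⁻¹ · (δ_ε u)(δ_ε v)‖ = 0`,
uniformly for `(u, v)` in compact sets. -/
theorem group_operation_differentiable_at_identity
    {G : Type*} [Group G] [UniformSpace G] [IsUniformGroup G]
    [LocallyCompactSpace G] [T2Space G]
    (δ : ℝ → G → G)
    (hδcont : ∀ ε : ℝ, 0 < ε → Continuous (δ ε))
    (hcomp : ∀ ε μ : ℝ, 0 < ε → 0 < μ → ∀ x : G, δ ε (δ μ x) = δ (ε * μ) x)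
    (hone : ∀ x : G, δ 1 x = x)
    (hH0 : ∀ K : Set G, IsCompact K →
      TendstoUniformlyOn (fun (ε : ℝ) (x : G) => δ ε x) (fun _ => (1 : G))
        (𝓝[>] (0 : ℝ)) K)
    (β : G → G → G)
    (hH1 : ∀ K : Set (G × G), IsCompact K →
      TendstoUniformlyOn (fun (ε : ℝ) (p : G × G) => δ ε⁻¹ (δ ε p.1 * δ ε p.2))
        (fun p => β p.1 p.2) (𝓝[>] (0 : ℝ)) K)
    (hH2 : ∀ K : Set G, IsCompact K →
      TendstoUniformlyOn (fun (ε : ℝ) (x : G) => δ ε⁻¹ ((δ ε x)⁻¹)) (fun x => x⁻¹)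
        (𝓝[>] (0 : ℝ)) K)
    (nrm : G → ℝ) (hncont : Continuous nrm)
    (hnonneg : ∀ x : G, 0 ≤ nrm x)
    (hzero : ∀ x : G, nrm x = 0 ↔ x = 1)
    (hsub : ∀ x y : G, nrm (x * y) ≤ nrm x + nrm y)
    (hsymm : ∀ x : G, nrm x⁻¹ = nrm x)
    (nrmN : G → ℝ)
    (hnrmN : ∀ K : Set G, IsCompact K →
      TendstoUniformlyOn (fun (ε : ℝ) (x : G) => (1 / ε) * nrm (δ ε x)) nrmN
        (𝓝[>] (0 : ℝ)) K)
    (hnrmN0 : ∀ x : G, nrmN x = 0 → x = 1) :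
    ∀ K : Set (G × G), IsCompact K →
      TendstoUniformlyOn
        (fun (ε : ℝ) (p : G × G) =>
          (1 / ε) * nrm ((δ ε (β p.1 p.2))⁻¹ * (δ ε p.1 * δ ε p.2)))
        (fun _ => (0 : ℝ)) (𝓝[>] (0 : ℝ)) K := by
  have hpos : ∀ᶠ ε : ℝ in 𝓝[>] 0, (0:ℝ) < ε := self_mem_nhdsWithin
  -- δ ε ∘ δ ε⁻¹ = id
  have hinv : ∀ ε : ℝ, 0 < ε → ∀ x : G, δ ε (δ ε⁻¹ x) = x := by
    intro ε hε x
    rw [hcomp ε ε⁻¹ hε (by positivity), mul_inv_cancel₀ (ne_of_gt hε), hone]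
  -- continuity of the H1 approximants and of β on compacts
  have hFcont : ∀ V : Set (G × G), ∀ᶠ ε : ℝ in 𝓝[>] 0,
      ContinuousOn (fun p : G × G => δ ε⁻¹ (δ ε p.1 * δ ε p.2)) V := by
    intro V
    filter_upwards [hpos] with ε hε
    exact ((hδcont ε⁻¹ (by positivity)).comp
      (((hδcont ε hε).comp continuous_fst).mul
        ((hδcont ε hε).comp continuous_snd))).continuousOn
  have hβcont : ∀ V : Set (G × G), IsCompact V →
      ContinuousOn (fun p : G × G => β p.1 p.2) V := fun V hV =>
    (hH1 V hV).continuousOn (hFcont V).frequently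
  -- Step 1 : δ ε 1 = 1
  have hδ1 : ∀ ε : ℝ, 0 < ε → δ ε (1:G) = 1 := by
    have ha : Tendsto (fun ε : ℝ => δ ε⁻¹ ((δ ε (1:G))⁻¹)) (𝓝[>] 0) (𝓝 1) := by
      simpa using (hH2 {1} isCompact_singleton).tendsto_at rfl
    obtain ⟨V, hVc, hVn⟩ := exists_compact_mem_nhds (((1:G), (1:G)) : G × G)
    have hg : Tendsto (fun ε : ℝ => ((1:G), δ ε⁻¹ ((δ ε (1:G))⁻¹))) (𝓝[>] 0)
        (𝓝[V] ((1:G), 1)) := by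
      rw [tendsto_nhdsWithin_iff]
      refine ⟨tendsto_const_nhds.prodMk_nhds ha, ?_⟩
      exact (tendsto_const_nhds.prodMk_nhds ha).eventually_mem hVn
    have key0 := (hH1 V hVc).tendsto_comp
      ((hβcont V hVc).continuousWithinAt (mem_of_mem_nhds hVn)) hg
    -- key0 : Tendsto (fun ε => δ ε⁻¹ (δ ε 1 * δ ε (a ε))) .. (𝓝 (β 1 1))
    have key : Tendsto (fun ε : ℝ => δ ε⁻¹ (1:G)) (𝓝[>] 0) (𝓝 (β 1 1)) := by
      refine key0.congr' ?_
      filter_upwards [hpos] with ε hε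
      show δ ε⁻¹ (δ ε 1 * δ ε (δ ε⁻¹ ((δ ε 1)⁻¹))) = δ ε⁻¹ 1
      rw [hinv ε hε, mul_inv_cancel]
    have hfix : ∀ s : ℝ, 0 < s → δ s (β 1 1) = β 1 1 := by
      intro s hs
      have h1 : Tendsto (fun ε : ℝ => δ s (δ ε⁻¹ (1:G))) (𝓝[>] 0)
          (𝓝 (δ s (β 1 1))) := ((hδcont s hs).tendsto _).comp key
      have hmap : Tendsto (fun ε : ℝ => ε / s) (𝓝[>] (0:ℝ)) (𝓝[>] (0:ℝ)) := by
        apply tendsto_nhdsWithin_of_tendsto_nhds_of_eventually_within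
        · have : Tendsto (fun ε : ℝ => ε / s) (𝓝 0) (𝓝 (0 / s)) :=
            tendsto_id.div_const s
          simpa using this.mono_left nhdsWithin_le_nhds
        · filter_upwards [hpos] with ε hε
          exact div_pos hε hs
      have h2 : Tendsto (fun ε : ℝ => δ s (δ ε⁻¹ (1:G))) (𝓝[>] 0) (𝓝 (β 1 1)) := by
        refine (key.comp hmap).congr' ?_
        filter_upwards [hpos] with ε hε
        show δ (ε / s)⁻¹ 1 = δ s (δ ε⁻¹ 1)
        rw [hcomp s ε⁻¹ hs (by positivity)]
        congr 1
        rw [inv_div, div_eq_mul_inv]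
      exact tendsto_nhds_unique h1 h2
    have hc1 : β 1 1 = 1 := by
      have h1 : Tendsto (fun s : ℝ => δ s (β 1 1)) (𝓝[>] 0) (𝓝 1) :=
        (hH0 {β 1 1} isCompact_singleton).tendsto_at rfl
      have h2 : Tendsto (fun s : ℝ => δ s (β 1 1)) (𝓝[>] 0) (𝓝 (β 1 1)) := by
        refine tendsto_const_nhds.congr' ?_
        filter_upwards [hpos] with s hs
        exact (hfix s hs).symm
      exact tendsto_nhds_unique h2 h1
    intro ε hε
    calc δ ε 1 = δ ε (β 1 1) := by rw [hc1]
      _ = β 1 1 := hfix ε hε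
      _ = 1 := hc1
  -- Step 2 : nrmN 1 = 0
  have hnrm1 : nrm (1:G) = 0 := (hzero 1).2 rfl
  have hN1 : nrmN (1:G) = 0 := by
    have h1 : Tendsto (fun ε : ℝ => (1/ε) * nrm (δ ε (1:G))) (𝓝[>] 0)
        (𝓝 (nrmN 1)) := (hnrmN {1} isCompact_singleton).tendsto_at rfl
    have h2 : Tendsto (fun ε : ℝ => (1/ε) * nrm (δ ε (1:G))) (𝓝[>] 0) (𝓝 0) := by
      refine tendsto_const_nhds.congr' ?_
      filter_upwards [hpos] with ε hε
      rw [hδ1 ε hε, hnrm1, mul_zero]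
    exact tendsto_nhds_unique h1 h2
  -- Step 3 : β x⁻¹ x = 1
  have hβinv : ∀ x : G, β x⁻¹ x = 1 := by
    intro x
    have ha : Tendsto (fun ε : ℝ => δ ε⁻¹ ((δ ε x)⁻¹)) (𝓝[>] 0) (𝓝 x⁻¹) :=
      (hH2 {x} isCompact_singleton).tendsto_at rfl
    obtain ⟨V, hVc, hVn⟩ := exists_compact_mem_nhds ((x⁻¹, x) : G × G)
    have hg : Tendsto (fun ε : ℝ => (δ ε⁻¹ ((δ ε x)⁻¹), x)) (𝓝[>] 0)
        (𝓝[V] (x⁻¹, x)) := by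
      rw [tendsto_nhdsWithin_iff]
      refine ⟨ha.prodMk_nhds tendsto_const_nhds, ?_⟩
      exact (ha.prodMk_nhds tendsto_const_nhds).eventually_mem hVn
    have h1 := (hH1 V hVc).tendsto_comp
      ((hβcont V hVc).continuousWithinAt (mem_of_mem_nhds hVn)) hg
    have h2 : Tendsto (fun ε : ℝ => δ ε⁻¹ (δ ε (δ ε⁻¹ ((δ ε x)⁻¹)) * δ ε x))
        (𝓝[>] 0) (𝓝 1) := by
      refine tendsto_const_nhds.congr' ?_
      filter_upwards [hpos] with ε hε
      rw [hinv ε hε, inv_mul_cancel, hδ1 ε⁻¹ (by positivity)]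
    exact (tendsto_nhds_unique h1 h2)
  -- Main argument
  intro K hK
  set B : G × G → G := fun p => β p.1 p.2 with hB
  have hBcont : ContinuousOn B K := hβcont K hK
  have hBK : IsCompact (B '' K) := hK.image_of_continuousOn hBcont
  have ha : TendstoUniformlyOn (fun (ε : ℝ) (p : G × G) => δ ε⁻¹ ((δ ε (B p))⁻¹))
      (fun p => (B p)⁻¹) (𝓝[>] 0) K := by
    have := (hH2 (B '' K) hBK).comp B
    exact this.mono (subset_preimage_image B K)
  have hw : TendstoUniformlyOn (fun (ε : ℝ) (p : G × G) => δ ε⁻¹ (δ ε p.1 * δ ε p.2))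
      B (𝓝[>] 0) K := hH1 K hK
  have hpair := my_prod_same ha hw
  -- the limit pair function and its compact image
  have hg0cont : ContinuousOn (fun p : G × G => ((B p)⁻¹, B p)) K :=
    (hBcont.inv).prodMk hBcont
  have hC : IsCompact ((fun p : G × G => ((B p)⁻¹, B p)) '' K) :=
    hK.image_of_continuousOn hg0cont
  obtain ⟨M, hMc, hMint⟩ := exists_compact_superset hC
  have hg0M : ∀ p ∈ K, ((B p)⁻¹, B p) ∈ M := fun p hp =>
    interior_subset (hMint ⟨p, hp, rfl⟩)
  have hmemM : ∀ᶠ ε : ℝ in 𝓝[>] 0, ∀ p ∈ K,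
      (δ ε⁻¹ ((δ ε (B p))⁻¹), δ ε⁻¹ (δ ε p.1 * δ ε p.2)) ∈ M := by
    have := my_eventually_mem hpair isOpen_interior
      (fun p hp => hMint ⟨p, hp, rfl⟩) hC
    filter_upwards [this] with ε hε p hp using interior_subset (hε p hp)
  have hz0 := my_comp_moving hMc (hH1 M hMc) (hβcont M hMc) hpair hg0M hmemM
  have hz1 : TendstoUniformlyOn
      (fun (ε : ℝ) (p : G × G) =>
        δ ε⁻¹ (δ ε (δ ε⁻¹ ((δ ε (B p))⁻¹)) * δ ε (δ ε⁻¹ (δ ε p.1 * δ ε p.2))))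
      (fun _ => (1:G)) (𝓝[>] 0) K := by
    have heq : (fun p : G × G => β ((B p)⁻¹, B p).1 ((B p)⁻¹, B p).2)
        = fun _ : G × G => (1:G) := funext fun p => hβinv (B p)
    rw [heq] at hz0
    exact hz0
  -- final estimate
  rw [Metric.tendstoUniformlyOn_iff]
  intro η hη
  obtain ⟨L, hLc, hLn⟩ := exists_compact_mem_nhds (1:G)
  have hL1 : (1:G) ∈ L := mem_of_mem_nhds hLn
  have hNcont : ContinuousOn nrmN L := by
    refine (hnrmN L hLc).continuousOn (Eventually.frequently ?_)
    filter_upwards [hpos] with ε hε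
    exact (continuous_const.mul (hncont.comp (hδcont ε hε))).continuousOn
  have hNat1 : Tendsto nrmN (𝓝[L] 1) (𝓝 0) := by
    have := (hNcont 1 hL1)
    rw [ContinuousWithinAt, hN1] at this
    exact this
  have hUmem : {x : G | |nrmN x| < η / 2} ∈ 𝓝[L] (1:G) := by
    have hset : {y : ℝ | |y| < η / 2} ∈ 𝓝 (0:ℝ) := by
      have hop : IsOpen {y : ℝ | |y| < η / 2} := isOpen_lt (continuous_abs) continuous_const
      exact hop.mem_nhds (by simpa using half_pos hη)
    exact mem_map.1 (hNat1 hset)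
  rw [mem_nhdsWithin] at hUmem
  obtain ⟨U, hUopen, hU1, hUsub⟩ := hUmem
  -- eventually z ε p ∈ U ∩ L
  have hmemUL : ∀ᶠ ε : ℝ in 𝓝[>] 0, ∀ p ∈ K,
      δ ε⁻¹ (δ ε (δ ε⁻¹ ((δ ε (B p))⁻¹)) * δ ε (δ ε⁻¹ (δ ε p.1 * δ ε p.2)))
        ∈ U ∩ interior L := by
    refine my_tuo_const_iff.1 hz1 _ ?_
    exact inter_mem (hUopen.mem_nhds hU1) (interior_mem_nhds.2 hLn)
  have hclose : ∀ᶠ ε : ℝ in 𝓝[>] 0, ∀ x ∈ L,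
      dist (nrmN x) ((1/ε) * nrm (δ ε x)) < η / 2 :=
    Metric.tendstoUniformlyOn_iff.1 (hnrmN L hLc) (η/2) (half_pos hη)
  filter_upwards [hpos, hmemUL, hclose] with ε hε hm hcl
  intro p hp
  set z : G := δ ε⁻¹ (δ ε (δ ε⁻¹ ((δ ε (B p))⁻¹)) * δ ε (δ ε⁻¹ (δ ε p.1 * δ ε p.2)))
    with hzdef
  have hzU : z ∈ U := (hm p hp).1
  have hzL : z ∈ L := interior_subset (hm p hp).2
  have hzeq : (δ ε (β p.1 p.2))⁻¹ * (δ ε p.1 * δ ε p.2) = δ ε z := by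
    rw [hzdef]
    simp only [hinv ε hε]
    rfl
  have hbound1 : |nrmN z| < η / 2 := hUsub ⟨hzU, hzL⟩
  have hbound2 : dist (nrmN z) ((1/ε) * nrm (δ ε z)) < η / 2 := hcl z hzL
  have hdist : dist (0:ℝ) ((1/ε) * nrm (δ ε z))
      ≤ |nrmN z| + |nrmN z - (1/ε) * nrm (δ ε z)| := by
    rw [Real.dist_eq, zero_sub, abs_neg]
    have h := abs_sub (nrmN z) (nrmN z - (1/ε) * nrm (δ ε z))
    simpa [sub_sub_cancel] using h
  show dist (0:ℝ) ((1:ℝ)/ε * nrm ((δ ε (β p.1 p.2))⁻¹ * (δ ε p.1 * δ ε p.2))) < η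
  rw [hzeq]
  calc dist (0:ℝ) ((1/ε) * nrm (δ ε z))
      ≤ |nrmN z| + |nrmN z - (1/ε) * nrm (δ ε z)| := hdist
    _ = |nrmN z| + dist (nrmN z) ((1/ε) * nrm (δ ε z)) := by rw [Real.dist_eq]
    _ < η / 2 + η / 2 := add_lt_add hbound1 hbound2
    _ = η := add_halves η
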